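/- For all n ≥ 0, SOME-bar(n) = 2 · Σ_{k=0}^{n} p-bar(k) · σ_{o−e}(n−k), where σ_{o−e}(a) is the sum of odd divisors d of a with a/d odd, minus the sum of even divisors d of a with a/d odd (and σ_{o−e}(0) = 0). -/

import Mathlib

/-- `SOMEbar n` : sum over all overpartitions of `n` (a partition of `n` together with a
set of overlined distinct parts) of (sum of odd parts) − (sum of even parts). -/
noncomputable def SOMEbar (n : ℕ) : ℤ :=
  ∑ p : Nat.Partition n, ∑ _S ∈ p.parts.toFinset.powerset,
    (((p.parts.filter (fun x => Odd x)).sum : ℤ)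
      - ((p.parts.filter (fun x => Even x)).sum : ℤ))

/-- number of overpartitions of `n`. -/
noncomputable def pbar (n : ℕ) : ℕ :=
  ∑ p : Nat.Partition n, p.parts.toFinset.powerset.card

/-- sum of odd divisors `d` of `a` with `a/d` odd, minus sum of even divisors `d`
of `a` with `a/d` odd (equal to `0` for `a = 0`). -/
def sigmaOE (a : ℕ) : ℤ :=
  (∑ d ∈ a.divisors.filter (fun d => Odd (a / d) ∧ Odd d), (d : ℤ))
    - (∑ d ∈ a.divisors.filter (fun d => Odd (a / d) ∧ Even d), (d : ℤ))

/-- sum of all parts equal to `b` appearing in all overpartitions of `n`. -/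
noncomputable def Sbar (b n : ℕ) : ℕ :=
  ∑ p : Nat.Partition n, ∑ _S ∈ p.parts.toFinset.powerset, p.parts.count b * b

/-- sum of all odd parts appearing in all overpartitions of `n`. -/
noncomputable def Sobar (n : ℕ) : ℕ :=
  ∑ p : Nat.Partition n, ∑ _S ∈ p.parts.toFinset.powerset,
    (p.parts.filter (fun x => Odd x)).sum

/-- sum of all even parts appearing in all overpartitions of `n`. -/
noncomputable def Sebar (n : ℕ) : ℕ :=
  ∑ p : Nat.Partition n, ∑ _S ∈ p.parts.toFinset.powerset,
    (p.parts.filter (fun x => Even x)).sum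


noncomputable def pb (n : ℕ) : ℕ := ∑ p : Nat.Partition n, 2 ^ p.parts.toFinset.card
noncomputable def Abq (b n : ℕ) : ℕ :=
  ∑ p : Nat.Partition n, if Multiset.count b p.parts = 0 then 2 ^ p.parts.toFinset.card else 0
noncomputable def Mbq (b n : ℕ) : ℕ :=
  ∑ p : Nat.Partition n, if 1 ≤ Multiset.count b p.parts then 2 ^ p.parts.toFinset.card else 0
noncomputable def Sbq (b n : ℕ) : ℕ :=
  ∑ p : Nat.Partition n, Multiset.count b p.parts * 2 ^ p.parts.toFinset.card
noncomputable def Rbq (b n : ℕ) : ℕ :=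
  ∑ j ∈ (Finset.range (n+1)).filter (fun j => Odd j ∧ j * b ≤ n), pb (n - j * b)

lemma card_helper {s : Multiset ℕ} {b : ℕ} (hs : b ∈ s) :
    s.toFinset.card = (s.erase b).toFinset.card
      + (if Multiset.count b (s.erase b) = 0 then 1 else 0) := by
  conv_lhs => rw [← Multiset.cons_erase hs]
  rw [Multiset.toFinset_cons]
  by_cases h : b ∈ (s.erase b).toFinset
  · have h' : Multiset.count b (s.erase b) ≠ 0 := by
      simp only [Multiset.mem_toFinset] at h
      exact fun hc => by simp [Multiset.count_eq_zero.1 hc] at h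
    rw [Finset.insert_eq_self.2 h, if_neg h']; omega
  · have h' : Multiset.count b (s.erase b) = 0 := by
      simp only [Multiset.mem_toFinset] at h
      exact Multiset.count_eq_zero.2 h
    rw [Finset.card_insert_of_notMem h, if_pos h']

lemma remove_part (b n : ℕ) (hb : 0 < b) (hbn : b ≤ n) (f : ℕ → ℕ → ℕ) :
    (∑ p : Nat.Partition n,
      if 1 ≤ Multiset.count b p.parts then f (Multiset.count b p.parts) p.parts.toFinset.card else 0)
    = ∑ q : Nat.Partition (n - b),
        f (Multiset.count b q.parts + 1)
          (q.parts.toFinset.card + if Multiset.count b q.parts = 0 then 1 else 0) := by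
  rw [← Finset.sum_filter]
  refine Finset.sum_bij'
    (i := fun p hp => (⟨p.parts.erase b,
      fun hi => p.parts_pos (Multiset.mem_of_mem_erase hi), by
        have hmem : b ∈ p.parts :=
          Multiset.count_pos.1 (Finset.mem_filter.1 hp).2
        have h2 := congrArg Multiset.sum (Multiset.cons_erase hmem)
        rw [Multiset.sum_cons, p.parts_sum] at h2
        omega⟩ : Nat.Partition (n - b)))
    (j := fun q _ => (⟨b ::ₘ q.parts,
      fun hi => by
        rcases Multiset.mem_cons.1 hi with h | h
        · exact h ▸ hb
        · exact q.parts_pos h, by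
        rw [Multiset.sum_cons, q.parts_sum]; omega⟩ : Nat.Partition n))
    ?_ ?_ ?_ ?_ ?_
  · intro p hp; exact Finset.mem_univ _
  · intro q hq
    simp only [Finset.mem_filter, Finset.mem_univ, true_and]
    simp [Multiset.count_cons_self]
  · intro p hp
    have hmem : b ∈ p.parts := Multiset.count_pos.1 (Finset.mem_filter.1 hp).2
    apply Nat.Partition.ext
    simp [Multiset.cons_erase hmem]
  · intro q hq
    apply Nat.Partition.ext
    simp [Multiset.erase_cons_head]
  · intro p hp
    have hc : 1 ≤ Multiset.count b p.parts := (Finset.mem_filter.1 hp).2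
    have hmem : b ∈ p.parts := Multiset.count_pos.1 hc
    have h1 : Multiset.count b (p.parts.erase b) + 1 = Multiset.count b p.parts := by
      rw [Multiset.count_erase_self]; omega
    dsimp only
    rw [← card_helper hmem, h1]
lemma pb_split (b n : ℕ) : pb n = Abq b n + Mbq b n := by
  unfold pb Abq Mbq
  rw [← Finset.sum_add_distrib]
  refine Finset.sum_congr rfl fun p _ => ?_
  by_cases h : Multiset.count b p.parts = 0
  · simp [h]
  · simp [h, Nat.one_le_iff_ne_zero.2 h]

lemma B1 {b n : ℕ} (hb : 0 < b) (hbn : b ≤ n) : Mbq b n = pb (n - b) + Abq b (n - b) := by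
  unfold Mbq
  rw [remove_part b n hb hbn (fun _ d => 2 ^ d)]
  unfold pb Abq
  rw [← Finset.sum_add_distrib]
  refine Finset.sum_congr rfl fun q _ => ?_
  by_cases h : Multiset.count b q.parts = 0 <;> simp [h, pow_succ, two_mul] <;> omega

lemma B2 {b n : ℕ} (hb : 0 < b) (hbn : b ≤ n) :
    Sbq b n = Sbq b (n - b) + (pb (n - b) + Abq b (n - b)) := by
  unfold Sbq
  have h0 : ∀ p : Nat.Partition n,
      Multiset.count b p.parts * 2 ^ p.parts.toFinset.card
      = if 1 ≤ Multiset.count b p.parts then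
          Multiset.count b p.parts * 2 ^ p.parts.toFinset.card else 0 := by
    intro p
    split_ifs with h
    · rfl
    · have : Multiset.count b p.parts = 0 := by omega
      simp [this]
  rw [Finset.sum_congr rfl fun p _ => h0 p]
  rw [remove_part b n hb hbn (fun c d => c * 2 ^ d)]
  unfold pb Abq
  rw [← Finset.sum_add_distrib, ← Finset.sum_add_distrib]
  refine Finset.sum_congr rfl fun q _ => ?_
  by_cases h : Multiset.count b q.parts = 0 <;> simp [h, pow_succ, two_mul] <;> ring

lemma count_parts_zero {b n : ℕ} (h : n < b) (p : Nat.Partition n) :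
    Multiset.count b p.parts = 0 := by
  rw [Multiset.count_eq_zero]
  intro hm
  have h2 := Multiset.single_le_sum (fun x _ => Nat.zero_le x) b hm
  rw [p.parts_sum] at h2
  omega

lemma Sbq_zero {b n : ℕ} (h : n < b) : Sbq b n = 0 := by
  unfold Sbq
  refine Finset.sum_eq_zero fun p _ => ?_
  simp [count_parts_zero h p]

lemma Mbq_zero {b n : ℕ} (h : n < b) : Mbq b n = 0 := by
  unfold Mbq
  refine Finset.sum_eq_zero fun p _ => ?_
  simp [count_parts_zero h p]

lemma Rbq_zero {b n : ℕ} (hb : 0 < b) (h : n < b) : Rbq b n = 0 := by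
  unfold Rbq
  rw [Finset.sum_filter]
  refine Finset.sum_eq_zero fun j _ => ?_
  rw [if_neg]
  rintro ⟨hodd, hle⟩
  have h1 : 1 ≤ j := hodd.pos
  have h2 : b ≤ j * b := Nat.le_mul_of_pos_left b h1
  omega
lemma Rbq_rec {b n : ℕ} (hb : 0 < b) (hbn : b ≤ n) :
    Rbq b n = pb (n - b) + Rbq b (n - b - b) := by
  unfold Rbq
  have h1 : (1 : ℕ) ∈ (Finset.range (n+1)).filter (fun j => Odd j ∧ j * b ≤ n) := by
    simp only [Finset.mem_filter, Finset.mem_range]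
    exact ⟨by omega, odd_one, by omega⟩
  rw [← Finset.add_sum_erase _ _ h1, one_mul]
  congr 1
  refine Finset.sum_bij' (i := fun j _ => j - 2) (j := fun j _ => j + 2) ?_ ?_ ?_ ?_ ?_
  · intro j hj
    beta_reduce
    obtain ⟨hne, hjf⟩ := Finset.mem_erase.1 hj
    obtain ⟨hjr, hodd, hle⟩ := by
      simpa only [Finset.mem_filter, Finset.mem_range] using hjf
    obtain ⟨k, hk⟩ := hodd
    have h3 : 3 ≤ j := by omega
    have e : (j - 2) * b + 2 * b = j * b := by
      rw [← Nat.add_mul]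
      congr 1
      omega
    have hle2 : j - 2 ≤ (j - 2) * b := Nat.le_mul_of_pos_right _ hb
    simp only [Finset.mem_filter, Finset.mem_range]
    exact ⟨by omega, ⟨k - 1, by omega⟩, by omega⟩
  · intro j hj
    beta_reduce
    obtain ⟨hjr, hodd, hle⟩ := by
      simpa only [Finset.mem_filter, Finset.mem_range] using hj
    obtain ⟨k, hk⟩ := hodd
    have h1j : 1 ≤ j := by omega
    have e : (j + 2) * b = j * b + 2 * b := by rw [Nat.add_mul]
    have hbl : b ≤ j * b := Nat.le_mul_of_pos_left b h1j
    have hle2 : j + 2 ≤ (j + 2) * b := Nat.le_mul_of_pos_right _ hb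
    refine Finset.mem_erase.2 ⟨by omega, ?_⟩
    simp only [Finset.mem_filter, Finset.mem_range]
    exact ⟨by omega, ⟨k + 1, by omega⟩, by omega⟩
  · intro j hj
    beta_reduce
    obtain ⟨hne, hjf⟩ := Finset.mem_erase.1 hj
    obtain ⟨hjr, hodd, hle⟩ := by
      simpa only [Finset.mem_filter, Finset.mem_range] using hjf
    obtain ⟨k, hk⟩ := hodd
    omega
  · intro j hj
    beta_reduce
    omega
  · intro j hj
    beta_reduce
    obtain ⟨hne, hjf⟩ := Finset.mem_erase.1 hj
    obtain ⟨hjr, hodd, hle⟩ := by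
      simpa only [Finset.mem_filter, Finset.mem_range] using hjf
    obtain ⟨k, hk⟩ := hodd
    have h3 : 3 ≤ j := by omega
    have e : (j - 2) * b + 2 * b = j * b := by
      rw [← Nat.add_mul]
      congr 1
      omega
    congr 1
    omega

lemma key_main : ∀ n b : ℕ, 0 < b →
    (Mbq b n + 2 * Rbq b (n - b) = 2 * Rbq b n ∧ Sbq b n = 2 * Rbq b n) := by
  intro n
  induction n using Nat.strong_induction_on with
  | _ n ih =>
    intro b hb
    rcases lt_or_ge n b with h | h
    · have r1 : Rbq b n = 0 := Rbq_zero hb h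
      have r2 : Rbq b (n - b) = 0 := Rbq_zero hb (by omega)
      rw [Mbq_zero h, Sbq_zero h, r1, r2]
      omega
    · have hlt : n - b < n := by omega
      obtain ⟨ih1, ih2⟩ := ih (n - b) hlt b hb
      have hp := pb_split b (n - b)
      have hB1 := B1 hb h
      have hB2 := B2 hb h
      have hR := Rbq_rec hb h
      omega

lemma pbar_eq (n : ℕ) : pbar n = pb n := by
  unfold pbar pb
  exact Finset.sum_congr rfl fun p _ => Finset.card_powerset _

lemma parts_le {n : ℕ} (p : Nat.Partition n) {b : ℕ} (hb : b ∈ p.parts) : b ≤ n := by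
  have := Multiset.single_le_sum (fun x _ => Nat.zero_le x) b hb
  rwa [p.parts_sum] at this

lemma filter_sum_eq {n : ℕ} (p : Nat.Partition n) (pr : ℕ → Prop) [DecidablePred pr] :
    (Multiset.filter pr p.parts).sum
      = ∑ b ∈ Finset.range (n+1), if pr b then Multiset.count b p.parts * b else 0 := by
  have h1 := Finset.sum_multiset_map_count (Multiset.filter pr p.parts) (id : ℕ → ℕ)
  rw [Multiset.map_id] at h1
  rw [h1, Multiset.toFinset_filter, Finset.sum_filter]
  rw [Finset.sum_subset (show p.parts.toFinset ⊆ Finset.range (n+1) by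
      intro b hb
      exact Finset.mem_range.2 (by
        have := parts_le p (Multiset.mem_toFinset.1 hb); omega))]
  · refine Finset.sum_congr rfl fun b _ => ?_
    split_ifs with h
    · rw [Multiset.count_filter, if_pos h]
      simp
    · rfl
  · intro b _ hb
    have hc : Multiset.count b (Multiset.filter pr p.parts) = 0 := by
      rw [Multiset.count_eq_zero]
      intro hmem
      exact hb (Multiset.mem_toFinset.2 (Multiset.mem_of_mem_filter hmem))
    split_ifs <;> simp [hc]

lemma SOMEbar_eq (n : ℕ) :
    SOMEbar n = ∑ b ∈ Finset.range (n+1),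
      (if Odd b then (1:ℤ) else -1) * b * (Sbq b n : ℤ) := by
  unfold SOMEbar
  have step1 : ∀ p : Nat.Partition n,
      (∑ _S ∈ p.parts.toFinset.powerset,
        (((p.parts.filter (fun x => Odd x)).sum : ℤ)
          - ((p.parts.filter (fun x => Even x)).sum : ℤ)))
      = ∑ b ∈ Finset.range (n+1), (if Odd b then (1:ℤ) else -1) * b *
          ((Multiset.count b p.parts * 2 ^ p.parts.toFinset.card : ℕ) : ℤ) := by
    intro p
    rw [Finset.sum_const, Finset.card_powerset]
    rw [filter_sum_eq p (fun x => Odd x), filter_sum_eq p (fun x => Even x)]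
    rw [nsmul_eq_mul]
    push_cast
    rw [← Finset.sum_sub_distrib, Finset.mul_sum]
    refine Finset.sum_congr rfl fun b _ => ?_
    by_cases hb : Odd b
    · rw [if_pos hb, if_neg (Nat.not_even_iff_odd.2 hb), if_pos hb]
      ring
    · rw [if_neg hb, if_pos (Nat.not_odd_iff_even.1 hb), if_neg hb]
      ring
  rw [Finset.sum_congr rfl fun p _ => step1 p, Finset.sum_comm]
  refine Finset.sum_congr rfl fun b _ => ?_
  rw [← Finset.mul_sum]
  congr 1
  unfold Sbq
  push_cast
  rfl

lemma sigmaOE_eq (a : ℕ) : sigmaOE a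
    = ∑ d ∈ a.divisors.filter (fun d => Odd (a / d)), (if Odd d then (d:ℤ) else -(d:ℤ)) := by
  unfold sigmaOE
  have h1 : a.divisors.filter (fun d => Odd (a / d) ∧ Odd d)
      = (a.divisors.filter (fun d => Odd (a / d))).filter (fun d => Odd d) := by
    rw [Finset.filter_filter]
  have h2 : a.divisors.filter (fun d => Odd (a / d) ∧ Even d)
      = (a.divisors.filter (fun d => Odd (a / d))).filter (fun d => Even d) := by
    rw [Finset.filter_filter]
  have e1 : ∑ d ∈ Finset.filter (fun d => Odd d) (Finset.filter (fun d => Odd (a / d)) a.divisors), (d:ℤ)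
      = ∑ d ∈ Finset.filter (fun d => Odd (a / d)) a.divisors, (if Odd d then (d:ℤ) else 0) :=
    Finset.sum_filter _ _
  have e2 : ∑ d ∈ Finset.filter (fun d => Even d) (Finset.filter (fun d => Odd (a / d)) a.divisors), (d:ℤ)
      = ∑ d ∈ Finset.filter (fun d => Odd (a / d)) a.divisors, (if Even d then (d:ℤ) else 0) :=
    Finset.sum_filter _ _
  rw [h1, h2, e1, e2, ← Finset.sum_sub_distrib]
  refine Finset.sum_congr rfl fun d _ => ?_
  by_cases hd : Odd d
  · rw [if_pos hd, if_neg (Nat.not_even_iff_odd.2 hd), if_pos hd]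
    ring
  · rw [if_neg hd, if_pos (Nat.not_odd_iff_even.1 hd), if_neg hd]
    ring

lemma RHS_eq (n : ℕ) :
    ∑ k ∈ Finset.range (n+1), (pbar k : ℤ) * sigmaOE (n - k)
      = ∑ b ∈ Finset.range (n+1), (if Odd b then (1:ℤ) else -1) * b * (Rbq b n : ℤ) := by
  -- restrict RHS to positive b
  have hpos : ∀ b ∈ Finset.range (n+1),
      ((if Odd b then (1:ℤ) else -1) * b * (Rbq b n : ℤ)) ≠ 0 → 0 < b := by
    intro b _ hf
    by_contra h
    push_neg at h
    interval_cases b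
    simp at hf
  conv_rhs => rw [← Finset.sum_filter_of_ne hpos]
  -- expand both sides into double sums
  have lhs_eq : ∀ k ∈ Finset.range (n+1), (pbar k : ℤ) * sigmaOE (n - k)
      = ∑ d ∈ (n - k).divisors.filter (fun d => Odd ((n - k) / d)),
          (pbar k : ℤ) * (if Odd d then (d:ℤ) else -(d:ℤ)) := by
    intro k _
    rw [sigmaOE_eq, Finset.mul_sum]
  have rhs_eq : ∀ b ∈ (Finset.range (n+1)).filter (fun b => 0 < b),
      (if Odd b then (1:ℤ) else -1) * b * (Rbq b n : ℤ)
      = ∑ j ∈ (Finset.range (n+1)).filter (fun j => Odd j ∧ j * b ≤ n),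
          (if Odd b then (1:ℤ) else -1) * b * (pb (n - j * b) : ℤ) := by
    intro b _
    unfold Rbq
    push_cast
    rw [Finset.mul_sum]
  rw [Finset.sum_congr rfl lhs_eq, Finset.sum_congr rfl rhs_eq]
  rw [Finset.sum_sigma', Finset.sum_sigma']
  refine Finset.sum_nbij' (i := fun x => ⟨x.2, (n - x.1) / x.2⟩)
    (j := fun y => ⟨n - y.2 * y.1, y.1⟩) ?_ ?_ ?_ ?_ ?_
  · rintro ⟨k, d⟩ hx
    simp only [Finset.mem_sigma, Finset.mem_filter, Finset.mem_range, Nat.mem_divisors] at hx ⊢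
    obtain ⟨hk, ⟨hdvd, hne⟩, hodd⟩ := hx
    have hdpos : 0 < d := by
      rcases Nat.eq_zero_or_pos d with h | h
      · subst h; simp at hdvd; omega
      · exact h
    have hdle : d ≤ n - k := Nat.le_of_dvd (Nat.pos_of_ne_zero hne) hdvd
    have hjd : (n - k) / d * d = n - k := Nat.div_mul_cancel hdvd
    have hj1 : (n - k) / d ≤ (n - k) / d * d := Nat.le_mul_of_pos_right _ hdpos
    exact ⟨⟨by omega, hdpos⟩, by omega, hodd, by omega⟩
  · rintro ⟨b, j⟩ hy
    simp only [Finset.mem_sigma, Finset.mem_filter, Finset.mem_range, Nat.mem_divisors] at hy ⊢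
    obtain ⟨⟨hbr, hbpos⟩, hjr, hjodd, hjle⟩ := hy
    have hjpos : 0 < j := hjodd.pos
    have e : n - (n - j * b) = j * b := by omega
    refine ⟨by omega, ⟨?_, ?_⟩, ?_⟩
    · rw [e]; exact dvd_mul_left b j
    · rw [e]; positivity
    · rw [e, Nat.mul_div_cancel j hbpos]; exact hjodd
  · rintro ⟨k, d⟩ hx
    simp only [Finset.mem_sigma, Finset.mem_filter, Finset.mem_range, Nat.mem_divisors] at hx
    obtain ⟨hk, ⟨hdvd, hne⟩, hodd⟩ := hx
    have hjd : (n - k) / d * d = n - k := Nat.div_mul_cancel hdvd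
    have hkk : n - (n - k) / d * d = k := by omega
    dsimp only
    rw [hkk]
  · rintro ⟨b, j⟩ hy
    simp only [Finset.mem_sigma, Finset.mem_filter, Finset.mem_range, Nat.mem_divisors] at hy
    obtain ⟨⟨hbr, hbpos⟩, hjr, hjodd, hjle⟩ := hy
    have e : n - (n - j * b) = j * b := by omega
    dsimp only
    rw [e, Nat.mul_div_cancel j hbpos]
  · rintro ⟨k, d⟩ hx
    simp only [Finset.mem_sigma, Finset.mem_filter, Finset.mem_range, Nat.mem_divisors] at hx
    obtain ⟨hk, ⟨hdvd, hne⟩, hodd⟩ := hx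
    have hjd : (n - k) / d * d = n - k := Nat.div_mul_cancel hdvd
    have hkk : n - (n - k) / d * d = k := by omega
    dsimp only
    rw [hkk, pbar_eq]
    split_ifs <;> ring

theorem stmt_3 : ∀ n : ℕ,
    SOMEbar n = 2 * ∑ k ∈ Finset.range (n + 1), (pbar k : ℤ) * sigmaOE (n - k) := by
  intro n
  rw [SOMEbar_eq, RHS_eq, Finset.mul_sum]
  refine Finset.sum_congr rfl fun b _ => ?_
  rcases Nat.eq_zero_or_pos b with hb | hb
  · subst hb
    push_cast
    ring
  · rw [(key_main n b hb).2]
    push_cast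
    ring
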